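/- Let n ≥ 3 be odd, T > 0, and let φ : ℝⁿ → ℝ be continuously differentiable with K = {x ∈ ℝⁿ : φ(x) ≤ 0} compact, frontier K = {x : φ(x) = 0}, ∇φ(y) ≠ 0 for every y with φ(y) = 0, 0 in the interior of K, and K strongly star-shaped with respect to 0 (t·x is in the interior of K for every x ∈ K, t ∈ [0,1)). Then the Dirichlet problem for the uniform motion (ẍ = 0 in the interior of K, with elastic reflection at the boundary, x(0) = x(T) = 0) has a nontrivial solution: there exists z ≠ 0 with φ(z) = 0 such that the function x : [0,T] → ℝⁿ defined by x(t) = (2t/T)·z for t ∈ [0, T/2] and x(t) = (2(T−t)/T)·z for t ∈ [T/2, T] satisfies x(0) = x(T) = 0, x(t) lies in the interior of K for every t ≠ T/2, x(T/2) = z lies on the frontier of K, and the one-sided derivatives at T/2 obey the reflection law x'(T/2+) = x'(T/2−) − 2⟨x'(T/2−), ν⟩ν, where ν = ∇φ(z)/‖∇φ(z)‖ is the outer unit normal at z; moreover ‖x'(T/2+)‖ = ‖x'(T/2−)‖. -/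

import Mathlib

open Set
open scoped RealInnerProductSpace

/-- in a compact, smooth, strongly star-shaped (w.r.t. `0`) billiard
table `K = {φ ≤ 0} ⊂ ℝⁿ` with `n ≥ 3` odd, the Dirichlet problem for the uniform
motion (`ẍ = 0` with elastic reflection, `x(0) = x(T) = 0`) has a nontrivial
solution: a `there-and-back` trajectory along a ray hitting the boundary
orthogonally at a point `z`, at time `T/2`, where the elastic reflection law
holds with the outer unit normal `ν = ∇φ(z)/‖∇φ(z)‖`. -/
theorem uniform_motion_dirichlet_nontrivial_solution
    (n : ℕ) (hodd : Odd n) (hn : 3 ≤ n) (T : ℝ) (hT : 0 < T)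
    (φ : EuclideanSpace ℝ (Fin n) → ℝ) (hφ : ContDiff ℝ 1 φ)
    (hcpt : IsCompact {x : EuclideanSpace ℝ (Fin n) | φ x ≤ 0})
    (hfr : frontier {x : EuclideanSpace ℝ (Fin n) | φ x ≤ 0}
      = {x : EuclideanSpace ℝ (Fin n) | φ x = 0})
    (hgrad : ∀ y : EuclideanSpace ℝ (Fin n), φ y = 0 → gradient φ y ≠ 0)
    (h0 : (0 : EuclideanSpace ℝ (Fin n)) ∈ interior {x : EuclideanSpace ℝ (Fin n) | φ x ≤ 0})
    (hstar : ∀ x ∈ {x : EuclideanSpace ℝ (Fin n) | φ x ≤ 0}, ∀ t ∈ Set.Ico (0:ℝ) 1,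
      t • x ∈ interior {x : EuclideanSpace ℝ (Fin n) | φ x ≤ 0}) :
    ∃ z : EuclideanSpace ℝ (Fin n), z ≠ 0 ∧ φ z = 0 ∧
      ∀ x : ℝ → EuclideanSpace ℝ (Fin n),
        (∀ t : ℝ, x t = if t ≤ T / 2 then (2 * t / T) • z else (2 * (T - t) / T) • z) →
        x 0 = 0 ∧ x T = 0 ∧
        (∀ t ∈ Set.Icc 0 T, t ≠ T / 2 →
          x t ∈ interior {p : EuclideanSpace ℝ (Fin n) | φ p ≤ 0}) ∧
        x (T / 2) = z ∧
        z ∈ frontier {p : EuclideanSpace ℝ (Fin n) | φ p ≤ 0} ∧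
        ∃ vminus vplus : EuclideanSpace ℝ (Fin n),
          HasDerivWithinAt x vminus (Set.Iic (T / 2)) (T / 2) ∧
          HasDerivWithinAt x vplus (Set.Ici (T / 2)) (T / 2) ∧
          vplus = vminus
            - (2 * ⟪vminus, ‖gradient φ z‖⁻¹ • gradient φ z⟫)
              • (‖gradient φ z‖⁻¹ • gradient φ z) ∧
          ‖vplus‖ = ‖vminus‖ := by
  classical
  set K : Set (EuclideanSpace ℝ (Fin n)) := {x : EuclideanSpace ℝ (Fin n) | φ x ≤ 0}
    with hKdef
  have hK0 : (0 : EuclideanSpace ℝ (Fin n)) ∈ K := interior_subset h0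
  -- a point of maximal norm in K
  obtain ⟨z, hzK, hzmax⟩ :=
    hcpt.exists_isMaxOn ⟨0, hK0⟩ (continuous_norm.continuousOn)
  -- z ≠ 0
  have hz0 : z ≠ 0 := by
    obtain ⟨ε, hε, hball⟩ := Metric.isOpen_iff.1 isOpen_interior 0 h0
    set w : EuclideanSpace ℝ (Fin n) :=
      (ε / 2) • EuclideanSpace.single (⟨0, by omega⟩ : Fin n) (1 : ℝ) with hw
    have hwnorm : ‖w‖ = ε / 2 := by
      rw [hw, norm_smul, EuclideanSpace.norm_single]
      rw [Real.norm_eq_abs, norm_one, mul_one, abs_of_pos (by linarith : (0:ℝ) < ε / 2)]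
    have hwK : w ∈ K := interior_subset <| hball <| by
      rw [Metric.mem_ball, dist_zero_right, hwnorm]; linarith
    have hle : ‖w‖ ≤ ‖z‖ := hzmax hwK
    intro h
    rw [h, norm_zero, hwnorm] at hle
    linarith
  have hznorm : 0 < ‖z‖ := norm_pos_iff.2 hz0
  -- φ z = 0
  have hφz : φ z = 0 := by
    by_contra hne
    have hlt : φ z < 0 := lt_of_le_of_ne hzK hne
    have hzi : z ∈ interior K :=
      mem_interior_iff_mem_nhds.2 <| Filter.mem_of_superset
        (IsOpen.mem_nhds (isOpen_lt (hφ.continuous) continuous_const) hlt)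
        (fun y hy => le_of_lt (Set.mem_setOf_eq ▸ hy))
    obtain ⟨δ, hδ, hb⟩ := Metric.isOpen_iff.1 isOpen_interior z hzi
    have hmem : (1 + δ / (2 * ‖z‖)) • z ∈ K := by
      apply interior_subset
      apply hb
      rw [Metric.mem_ball, dist_eq_norm]
      have h1 : (1 + δ / (2 * ‖z‖)) • z - z = (δ / (2 * ‖z‖)) • z := by module
      rw [h1, norm_smul, Real.norm_eq_abs, abs_of_pos (div_pos hδ (by linarith))]
      rw [div_mul_eq_mul_div, div_lt_iff₀ (by linarith)]
      nlinarith
    have hle : ‖(1 + δ / (2 * ‖z‖)) • z‖ ≤ ‖z‖ := hzmax hmem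
    rw [norm_smul, Real.norm_eq_abs,
      abs_of_pos (by positivity : (0:ℝ) < 1 + δ / (2 * ‖z‖))] at hle
    nlinarith [div_pos hδ (by linarith : (0:ℝ) < 2 * ‖z‖)]
  -- Lagrange multipliers at z
  have hφz' : HasStrictFDerivAt φ (fderiv ℝ φ z) z :=
    (hφ.contDiffAt.hasStrictFDerivAt one_ne_zero)
  have hgradz : HasGradientAt φ (gradient φ z) z :=
    ((hφ.differentiable one_ne_zero) z).hasGradientAt
  have hfderiv_eq : fderiv ℝ φ z = InnerProductSpace.toDual ℝ (EuclideanSpace ℝ (Fin n)) (gradient φ z) :=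
    (hasGradientAt_iff_hasFDerivAt.1 hgradz).fderiv
  have hextr : IsLocalExtrOn (fun x : EuclideanSpace ℝ (Fin n) => ‖x‖ ^ 2)
      {x : EuclideanSpace ℝ (Fin n) | φ x = φ z} z := by
    refine Or.inr ?_
    have hsub : {x : EuclideanSpace ℝ (Fin n) | φ x = φ z} ⊆ K := fun y hy => by
      simp only [Set.mem_setOf_eq] at hy
      show φ y ≤ 0
      rw [hy, hφz]
    have hmax2 : IsMaxOn (fun x : EuclideanSpace ℝ (Fin n) => ‖x‖ ^ 2) K z := fun y hy => by
      have h := hzmax hy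
      simp only [Set.mem_setOf_eq] at h ⊢
      nlinarith [norm_nonneg y, norm_nonneg z, h]
    exact (hmax2.localize).on_subset hsub
  obtain ⟨a, b, hab, heq⟩ :=
    hextr.exists_multipliers_of_hasStrictFDerivAt_1d hφz' (hasStrictFDerivAt_norm_sq z)
  -- conclude gradient φ z = c • z
  have hg : gradient φ z ≠ 0 := hgrad z hφz
  have hvec : a • gradient φ z + (2 * b) • z = 0 := by
    have h2 : ∀ w : EuclideanSpace ℝ (Fin n), ⟪a • gradient φ z + (2 * b) • z, w⟫ = 0 := by
      intro w
      have h := DFunLike.congr_fun heq w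
      simp only [ContinuousLinearMap.add_apply, ContinuousLinearMap.smul_apply,
        ContinuousLinearMap.zero_apply, hfderiv_eq, InnerProductSpace.toDual_apply_apply,
        innerSL_apply_apply, smul_eq_mul, nsmul_eq_mul, Nat.cast_ofNat] at h
      rw [inner_add_left, real_inner_smul_left, real_inner_smul_left]
      linarith [h]
    have := h2 (a • gradient φ z + (2 * b) • z)
    exact inner_self_eq_zero.1 this
  have ha : a ≠ 0 := by
    intro h
    rw [h, zero_smul, zero_add] at hvec
    rcases smul_eq_zero.1 hvec with h' | h'
    · exact hab (by simp [h, show b = 0 by linarith])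
    · exact hz0 h'
  set c : ℝ := -(2 * b) / a with hc
  have hgc : gradient φ z = c • z := by
    have h1 : a • gradient φ z = (-(2 * b)) • z := by
      rw [neg_smul, eq_neg_iff_add_eq_zero]
      exact hvec
    have h2 : gradient φ z = a⁻¹ • ((-(2 * b)) • z) := by
      rw [← h1, smul_smul, inv_mul_cancel₀ ha, one_smul]
    rw [h2, smul_smul, hc, div_eq_inv_mul]
  have hc0 : c ≠ 0 := by
    intro h
    exact hg (by rw [hgc, h, zero_smul])
  refine ⟨z, hz0, hφz, ?_⟩
  intro x hx
  have hx0 : x 0 = 0 := by rw [hx 0]; simp [le_of_lt (by linarith : (0:ℝ) < T / 2)]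
  have hxT : x T = 0 := by
    rw [hx T, if_neg (by linarith)]
    simp
  have hxhalf : x (T / 2) = z := by
    rw [hx (T / 2), if_pos le_rfl]
    have : 2 * (T / 2) / T = 1 := by field_simp
    rw [this, one_smul]
  refine ⟨hx0, hxT, ?_, hxhalf, ?_, ?_⟩
  · -- interior membership
    intro t ht hne
    rcases le_or_gt t (T / 2) with h | h
    · have hlt : t < T / 2 := lt_of_le_of_ne h hne
      rw [hx t, if_pos h]
      refine hstar z hzK (2 * t / T) ⟨?_, ?_⟩
      · have ht0 := ht.1
        positivity
      · rw [div_lt_one hT]; linarith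
    · rw [hx t, if_neg (not_le.2 h)]
      refine hstar z hzK (2 * (T - t) / T) ⟨?_, ?_⟩
      · have htT : 0 ≤ T - t := by linarith [ht.2]
        positivity
      · rw [div_lt_one hT]; linarith
  · rw [hfr]; exact hφz
  · -- the reflection law
    refine ⟨(2 / T) • z, (-(2 / T)) • z, ?_, ?_, ?_, by simp⟩
    · -- left derivative
      have hb : HasDerivAt (fun t : ℝ => 2 * t) (2 : ℝ) (T / 2) := by
        simpa using (hasDerivAt_id (T / 2)).const_mul 2
      have h1 : HasDerivAt (fun t : ℝ => (2 * t / T) • z) ((2 / T) • z) (T / 2) :=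
        (hb.div_const T).smul_const z
      exact (h1.hasDerivWithinAt).congr
        (fun t htm => by rw [hx t]; exact if_pos htm)
        (by rw [hx (T / 2), if_pos le_rfl])
    · -- right derivative
      have hb : HasDerivAt (fun t : ℝ => 2 * (T - t)) (-2 : ℝ) (T / 2) := by
        simpa using ((hasDerivAt_id (T / 2)).const_sub T).const_mul 2
      have h2 : HasDerivAt (fun t : ℝ => (2 * (T - t) / T) • z) ((-(2 / T)) • z) (T / 2) := by
        have := (hb.div_const T).smul_const z
        simpa [neg_div] using this
      apply (h2.hasDerivWithinAt).congr
      · intro t htm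
        rcases eq_or_lt_of_le (Set.mem_Ici.1 htm) with h | h
        · rw [hx t, ← h, if_pos le_rfl]
          congr 1
          ring
        · rw [hx t, if_neg (not_le.2 h)]
      · rw [hx (T / 2), if_pos le_rfl]
        congr 1
        ring
    · -- reflection equation
      rw [hgc]
      have hnormg : ‖c • z‖ = |c| * ‖z‖ := by rw [norm_smul, Real.norm_eq_abs]
      set r : ℝ := (|c| * ‖z‖)⁻¹ * c with hr
      have hsmul : (‖c • z‖)⁻¹ • (c • z) = r • z := by
        rw [hnormg, smul_smul, hr]
      rw [hsmul]
      have hr2 : r ^ 2 * ‖z‖ ^ 2 = 1 := by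
        have hne : |c| * ‖z‖ ≠ 0 :=
          mul_ne_zero (abs_ne_zero.2 hc0) (ne_of_gt hznorm)
        rw [hr]
        field_simp
        rw [sq_abs]
      rw [real_inner_smul_left, real_inner_smul_right, real_inner_self_eq_norm_sq]
      rw [smul_smul]
      have : 2 * (2 / T * (r * ‖z‖ ^ 2)) * r = 4 / T * (r ^ 2 * ‖z‖ ^ 2) := by ring
      rw [this, hr2, mul_one]
      module
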